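/- The function f : [0,∞) → ℝ defined by f(t) = t^{1+p} − t, for fixed 0 < p ≤ 1, satisfies: f(0)=0, f'(0)=−1, f' is strictly increasing, and t ↦ (f(t)/f'(t) − t)/t^{p+1} is strictly increasing on (0, ν) where ν = sup{t ≥ 0 : f'(t) < 0}. -/

import Mathlib

theorem stmt7 (p : ℝ) (hp : 0 < p) (hp1 : p ≤ 1)
    (f f' : ℝ → ℝ)
    (hf : f = fun t => t ^ (1 + p) - t)
    (hf' : f' = fun t => (1 + p) * t ^ p - 1)
    (ν : ℝ) (hν : ν = sSup {t : ℝ | 0 ≤ t ∧ f' t < 0}) :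
    f 0 = 0 ∧ f' 0 = -1 ∧
      (∀ t ∈ Set.Ici (0:ℝ), HasDerivWithinAt f (f' t) (Set.Ici 0) t) ∧
      StrictMonoOn f' (Set.Ici 0) ∧
      StrictMonoOn (fun t => (f t / f' t - t) / t ^ (p + 1)) (Set.Ioo 0 ν) := by
  have h1p : (0:ℝ) < 1 + p := by linarith
  have hf'0 : f' 0 = -1 := by
    rw [hf']; simp [Real.zero_rpow hp.ne']
  refine ⟨?_, hf'0, ?_, ?_, ?_⟩
  · rw [hf]; simp [Real.zero_rpow h1p.ne']
  · intro t ht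
    have h := Real.hasDerivAt_rpow_const (x := t) (p := 1 + p) (Or.inr (by linarith))
    have h2 : HasDerivAt f ((1 + p) * t ^ p - 1) t := by
      rw [hf]
      have h3 := h.sub (hasDerivAt_id' t)
      rw [show 1 + p - 1 = p by ring] at h3
      exact h3
    rw [hf']
    exact h2.hasDerivWithinAt
  · intro a ha b hb hab
    rw [hf']
    simp only
    have : a ^ p < b ^ p := Real.rpow_lt_rpow ha hab hp
    nlinarith
  · -- key: on (0, ν), f' t < 0
    have hmem0 : (0:ℝ) ∈ {t : ℝ | 0 ≤ t ∧ f' t < 0} := ⟨le_refl 0, by rw [hf'0]; norm_num⟩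
    have hne : {t : ℝ | 0 ≤ t ∧ f' t < 0}.Nonempty := ⟨0, hmem0⟩
    have hneg : ∀ t ∈ Set.Ioo (0:ℝ) ν, (1 + p) * t ^ p < 1 := by
      intro t ht
      obtain ⟨s, hs, hts⟩ := exists_lt_of_lt_csSup hne (hν ▸ ht.2)
      have hfs : f' s < 0 := hs.2
      rw [hf'] at hfs
      have : t ^ p < s ^ p := Real.rpow_lt_rpow ht.1.le hts hp
      simp only at hfs
      nlinarith
    have key : ∀ t ∈ Set.Ioo (0:ℝ) ν,
        (f t / f' t - t) / t ^ (p + 1) = p / (1 - (1 + p) * t ^ p) := by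
      intro t ht
      have ht0 : 0 < t := ht.1
      have hD : (1 + p) * t ^ p - 1 < 0 := by linarith [hneg t ht]
      have htp : (0:ℝ) < t ^ p := Real.rpow_pos_of_pos ht0 _
      have e1 : t ^ (1 + p) = t * t ^ p := by
        rw [Real.rpow_add ht0]; simp
      have e2 : t ^ (p + 1) = t * t ^ p := by
        rw [Real.rpow_add ht0, Real.rpow_one]; ring
      have hDne : (1 + p) * t ^ p - 1 ≠ 0 := hD.ne
      have hdne : 1 - (1 + p) * t ^ p ≠ 0 := by linarith
      rw [hf, hf']
      simp only
      rw [e1, e2]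
      rw [div_eq_div_iff (mul_ne_zero ht0.ne' htp.ne') hdne, div_sub' hDne, div_mul_eq_mul_div, div_eq_iff hDne]
      ring
    intro a ha b hb hab
    simp only
    rw [key a ha, key b hb]
    have hda : 0 < 1 - (1 + p) * a ^ p := by linarith [hneg a ha]
    have hdb : 0 < 1 - (1 + p) * b ^ p := by linarith [hneg b hb]
    have : a ^ p < b ^ p := Real.rpow_lt_rpow ha.1.le hab hp
    have hlt : 1 - (1 + p) * b ^ p < 1 - (1 + p) * a ^ p := by nlinarith
    exact div_lt_div_of_pos_left hp hdb hlt
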